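/- There do not exist a real number t with 0 < t < 1 and a polynomial b(x) with nonnegative real coefficients, b(0) = 1, monic, such that (1 + t x + x^3) · b(x) has all coefficients in {0,1}. -/
import Mathlib


open Polynomial

theorem no_unfair_one_tx_x3 :
    ¬ ∃ (t : ℝ) (b : ℝ[X]), 0 < t ∧ t < 1 ∧ b.Monic ∧ b.coeff 0 = 1 ∧
      (∀ n, 0 ≤ b.coeff n) ∧
      (∀ n, ((1 + C t * X + X ^ 3) * b).coeff n = 0 ∨
            ((1 + C t * X + X ^ 3) * b).coeff n = 1) := by
  rintro ⟨t, b, ht0, ht1, hmon, hb0, hnn, hc⟩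
  have key : ∀ n : ℕ, ((1 + C t * X + X ^ 3) * b).coeff n
      = b.coeff n + t * (X * b).coeff n + (X ^ 3 * b).coeff n := by
    intro n
    simp [add_mul, coeff_add, mul_assoc, coeff_C_mul]
  have hX1 : (X * b).coeff 1 = b.coeff 0 := coeff_X_mul b 0
  have hX2 : (X * b).coeff 2 = b.coeff 1 := coeff_X_mul b 1
  have hX3 : (X * b).coeff 3 = b.coeff 2 := coeff_X_mul b 2
  have hP1 : (X ^ 3 * b).coeff 1 = 0 := by
    rw [mul_comm, coeff_mul_X_pow']; norm_num
  have hP2 : (X ^ 3 * b).coeff 2 = 0 := by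
    rw [mul_comm, coeff_mul_X_pow']; norm_num
  have hP3 : (X ^ 3 * b).coeff 3 = b.coeff 0 := by
    have := coeff_X_pow_mul b 3 0
    simpa using this
  have h1 := hc 1
  have h2 := hc 2
  have h3 := hc 3
  rw [key 1, hX1, hP1, hb0] at h1
  rw [key 2, hX2, hP2] at h2
  rw [key 3, hX3, hP3, hb0] at h3
  have hb1 : b.coeff 1 = 1 - t := by
    rcases h1 with h | h
    · nlinarith [hnn 1]
    · linarith
  have hb2 : b.coeff 2 = 1 - t + t * t := by
    rw [hb1] at h2
    rcases h2 with h | h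
    · nlinarith [hnn 2]
    · nlinarith
  rw [hb2] at h3
  rcases h3 with h | h
  · nlinarith [hnn 3]
  · nlinarith [hnn 3]
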